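/- Let C be a category whose type of objects is countable and whose Hom-sets are all countable, and let W be a class of morphisms of C admitting a left calculus of fractions. Then for any two objects X and Y, the Hom-set from the image of X to the image of Y in the localization of C at W is countable. -/
import Mathlib

open CategoryTheory

universe v u

/-- If `C` is a category with countably many objects and countable Hom-sets, and `W` is a
class of morphisms of `C` admitting a left calculus of fractions, then the Hom-sets of the
localization `C[W⁻¹]` between the images of any two objects of `C` are countable. -/
theorem countable_hom_localization_of_hasLeftCalculusOfFractions
    {C : Type u} [Category.{v} C] [Countable C]
    (hhom : ∀ X Y : C, Countable (X ⟶ Y))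
    (W : MorphismProperty C) [W.HasLeftCalculusOfFractions]
    (X Y : C) : Countable (W.Q.obj X ⟶ W.Q.obj Y) := by
  have : Countable (W.LeftFraction X Y) := by
    have : Function.Injective (fun φ : W.LeftFraction X Y => (⟨φ.Y', φ.f, φ.s⟩ :
        Σ Z : C, (X ⟶ Z) × (Y ⟶ Z))) := by
      rintro φ₁ φ₂ h
      obtain ⟨Z₁, f₁, s₁, h₁, rfl⟩ := φ₁.cases
      obtain ⟨Z₂, f₂, s₂, h₂, rfl⟩ := φ₂.cases
      obtain ⟨rfl, h2⟩ : Z₁ = Z₂ ∧ HEq (f₁, s₁) (f₂, s₂) := by simpa using h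
      obtain ⟨rfl, rfl⟩ : f₁ = f₂ ∧ s₁ = s₂ := by
        simpa using eq_of_heq h2
      rfl
    exact Countable.of_equiv _ (Equiv.ofInjective _ this).symm
  exact Function.Surjective.countable (f := fun φ : W.LeftFraction X Y =>
    φ.map W.Q (Localization.inverts W.Q W)) (fun f => by
      obtain ⟨φ, hφ⟩ := Localization.exists_leftFraction W.Q W f
      exact ⟨φ, hφ.symm⟩)
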